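/- arXiv:1912.09899 — 3 statements merged into one kernel-verified Lean document; each statement's English description precedes it below -/
import Mathlib

section
/- In the slab setting with q₁ = 0, let s ∈ (0, q₂] and suppose s ≤ q₁ⁱ for every excluded pair (q₁ⁱ, q₂ⁱ). Then rₓ(0, s) = s and r_y(0, s) = Pr(Y ∈ {z ∈ ℝ^d : δᵀ(z−x) ≥ σ‖δ‖₂ Φ⁻¹(1−s)}) = Φ(Φ⁻¹(s) + ‖δ‖₂/σ). -/
open MeasureTheory ProbabilityTheory Real Filter

/-- The standard normal cumulative distribution function Φ. -/
noncomputable def Phi (t : ℝ) : ℝ := (gaussianReal 0 1 (Set.Iic t)).toReal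

/-- The inverse Φ⁻¹ of the standard normal CDF (meaningful on (0,1)). -/
noncomputable def PhiInv : ℝ → ℝ := Function.invFun Phi

/-- The Gaussian measure N(m, σ²I) on ℝ^d. -/
noncomputable def gaussianVec {d : ℕ} (m : Fin d → ℝ) (σ : ℝ) :
    Measure (Fin d → ℝ) :=
  Measure.pi fun i => gaussianReal (m i) (Real.toNNReal (σ ^ 2))

/-- Dot product on ℝ^d. -/
def dotp {d : ℕ} (a b : Fin d → ℝ) : ℝ := ∑ i, a i * b i

/-- Euclidean (ℓ₂) norm on ℝ^d. -/
noncomputable def l2norm {d : ℕ} (a : Fin d → ℝ) : ℝ := Real.sqrt (∑ i, a i ^ 2)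

/-- Φ⁻¹ extended to EReal with the conventions Φ⁻¹(0) = −∞, Φ⁻¹(1) = +∞. -/
noncomputable def PhiInvE (p : ℝ) : EReal :=
  if p ≤ 0 then ⊥ else if 1 ≤ p then ⊤ else ((PhiInv p : ℝ) : EReal)

/-- Φ extended to EReal with Φ(−∞) = 0 and Φ(+∞) = 1. -/
noncomputable def PhiE (e : EReal) : ℝ :=
  if e = ⊥ then 0 else if e = ⊤ then 1 else Phi e.toReal

/-- The slab C(a,b) = {z : σ‖δ‖₂ Φ⁻¹(1−b) < δᵀ(z−x) ≤ σ‖δ‖₂ Φ⁻¹(1−a)},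
with the conventions Φ⁻¹(0) = −∞ and Φ⁻¹(1) = +∞ (assuming σ‖δ‖₂ > 0, the
defining inequalities are stated for the normalized quantity δᵀ(z−x)/(σ‖δ‖₂)). -/
noncomputable def slab {d : ℕ} (σ : ℝ) (x δ : Fin d → ℝ) (a b : ℝ) :
    Set (Fin d → ℝ) :=
  {z | PhiInvE (1 - b) < ((dotp δ (z - x) / (σ * l2norm δ) : ℝ) : EReal) ∧
      ((dotp δ (z - x) / (σ * l2norm δ) : ℝ) : EReal) ≤ PhiInvE (1 - a)}


open scoped NNReal ENNReal

lemma gaussianPDFReal_le (μ : ℝ) (v : ℝ≥0) (x : ℝ) :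
    gaussianPDFReal μ v x ≤ (Real.sqrt (2 * π * v))⁻¹ := by
  rw [gaussianPDFReal]
  have h1 : rexp (-(x - μ) ^ 2 / (2 * v)) ≤ 1 := by
    rw [Real.exp_le_one_iff]
    apply div_nonpos_of_nonpos_of_nonneg
    · simp [sq_nonneg]
    · positivity
  calc (Real.sqrt (2 * π * v))⁻¹ * rexp (-(x - μ) ^ 2 / (2 * v))
      ≤ (Real.sqrt (2 * π * v))⁻¹ * 1 := by
        apply mul_le_mul_of_nonneg_left h1 (by positivity)
    _ = _ := by ring

lemma Phi_mono : Monotone Phi := by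
  intro a b hab
  exact ENNReal.toReal_le_toReal (measure_ne_top _ _) (measure_ne_top _ _) |>.mpr
    (measure_mono (Set.Iic_subset_Iic.mpr hab))

lemma gaussian_pos_of_vol_pos {s : Set ℝ} (hs : volume s ≠ 0) : gaussianReal 0 1 s ≠ 0 := by
  intro h
  exact hs (gaussianReal_absolutelyContinuous' 0 one_ne_zero h)

lemma Phi_strictMono : StrictMono Phi := by
  intro a b hab
  have hsplit : Set.Iic b = Set.Iic a ∪ Set.Ioc a b := by
    rw [Set.Iic_union_Ioc_eq_Iic hab.le]
  have hdisj : Disjoint (Set.Iic a) (Set.Ioc a b) := Set.Iic_disjoint_Ioc le_rfl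
  have : gaussianReal 0 1 (Set.Iic b) = gaussianReal 0 1 (Set.Iic a) + gaussianReal 0 1 (Set.Ioc a b) := by
    rw [hsplit, measure_union hdisj measurableSet_Ioc]
  have hpos : gaussianReal 0 1 (Set.Ioc a b) ≠ 0 := by
    apply gaussian_pos_of_vol_pos
    simp [Real.volume_Ioc, hab]
  have h2 : Phi b = Phi a + (gaussianReal 0 1 (Set.Ioc a b)).toReal := by
    rw [Phi, Phi, this, ENNReal.toReal_add (measure_ne_top _ _) (measure_ne_top _ _)]
  rw [h2]
  have : 0 < (gaussianReal 0 1 (Set.Ioc a b)).toReal :=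
    ENNReal.toReal_pos hpos (measure_ne_top _ _)
  linarith

lemma Phi_pos (t : ℝ) : 0 < Phi t := by
  apply ENNReal.toReal_pos _ (measure_ne_top _ _)
  apply gaussian_pos_of_vol_pos
  simp [Real.volume_Iic]

lemma Phi_lt_one (t : ℝ) : Phi t < 1 := by
  have hc : gaussianReal 0 1 (Set.Iic t) + gaussianReal 0 1 (Set.Ioi t) = 1 := by
    rw [← measure_union (Set.Iic_disjoint_Ioi le_rfl) measurableSet_Ioi, Set.Iic_union_Ioi,
      measure_univ]
  have hpos : gaussianReal 0 1 (Set.Ioi t) ≠ 0 := by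
    apply gaussian_pos_of_vol_pos
    simp [Real.volume_Ioi]
  have h1 : Phi t + (gaussianReal 0 1 (Set.Ioi t)).toReal = 1 := by
    rw [Phi, ← ENNReal.toReal_add (measure_ne_top _ _) (measure_ne_top _ _), hc]; rfl
  have : 0 < (gaussianReal 0 1 (Set.Ioi t)).toReal :=
    ENNReal.toReal_pos hpos (measure_ne_top _ _)
  linarith

lemma Phi_add_Ioi (t : ℝ) : (gaussianReal 0 1 (Set.Ioi t)).toReal = 1 - Phi t := by
  have hc : gaussianReal 0 1 (Set.Iic t) + gaussianReal 0 1 (Set.Ioi t) = 1 := by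
    rw [← measure_union (Set.Iic_disjoint_Ioi le_rfl) measurableSet_Ioi, Set.Iic_union_Ioi,
      measure_univ]
  have h1 : Phi t + (gaussianReal 0 1 (Set.Ioi t)).toReal = 1 := by
    rw [Phi, ← ENNReal.toReal_add (measure_ne_top _ _) (measure_ne_top _ _), hc]; rfl
  linarith

lemma Phi_lipschitz : LipschitzWith ⟨(Real.sqrt (2 * π))⁻¹, by positivity⟩ Phi := by
  apply LipschitzWith.of_dist_le_mul
  have key : ∀ a b : ℝ, a ≤ b → Phi b - Phi a ≤ (Real.sqrt (2 * π))⁻¹ * (b - a) := by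
    intro a b hab
    have hsplit : Set.Iic b = Set.Iic a ∪ Set.Ioc a b := by
      rw [Set.Iic_union_Ioc_eq_Iic hab]
    have hdisj : Disjoint (Set.Iic a) (Set.Ioc a b) := Set.Iic_disjoint_Ioc le_rfl
    have h2 : Phi b - Phi a = (gaussianReal 0 1 (Set.Ioc a b)).toReal := by
      rw [Phi, Phi, hsplit, measure_union hdisj measurableSet_Ioc,
        ENNReal.toReal_add (measure_ne_top _ _) (measure_ne_top _ _)]
      ring
    rw [h2, gaussianReal_apply_eq_integral 0 one_ne_zero, ENNReal.toReal_ofReal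
      (integral_nonneg (fun _ => gaussianPDFReal_nonneg _ _ _))]
    calc ∫ x in Set.Ioc a b, gaussianPDFReal 0 1 x
        ≤ ∫ _x in Set.Ioc a b, (Real.sqrt (2 * π))⁻¹ := by
          apply integral_mono_of_nonneg
          · exact ae_of_all _ (fun x => gaussianPDFReal_nonneg _ _ _)
          · exact integrable_const _
          · apply ae_of_all
            intro x
            have := gaussianPDFReal_le 0 1 x
            simpa using this
      _ = (Real.sqrt (2 * π))⁻¹ * (b - a) := by
          rw [setIntegral_const]
          simp [Real.volume_Ioc, ENNReal.toReal_ofReal (sub_nonneg.mpr hab)]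
          rw [max_eq_left (sub_nonneg.mpr hab)]
          ring
  intro a b
  rcases le_total a b with h | h
  · rw [Real.dist_eq, Real.dist_eq, abs_of_nonpos (by linarith [Phi_mono h]),
      abs_of_nonpos (by linarith)]
    have := key a b h
    change _ ≤ (Real.sqrt (2 * π))⁻¹ * _
    linarith
  · rw [Real.dist_eq, Real.dist_eq, abs_of_nonneg (by linarith [Phi_mono h]),
      abs_of_nonneg (by linarith)]
    have := key b a h
    change _ ≤ (Real.sqrt (2 * π))⁻¹ * _
    linarith

lemma Phi_continuous : Continuous Phi := Phi_lipschitz.continuous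

lemma Phi_tendsto_atTop : Tendsto Phi atTop (nhds 1) := by
  have h := tendsto_measure_Iic_atTop (gaussianReal 0 1)
  rw [measure_univ] at h
  have h2 : Tendsto ENNReal.toReal (nhds 1) (nhds 1) := by
    have := (ENNReal.tendsto_toReal (a := 1) ENNReal.one_ne_top)
    simpa using this
  exact h2.comp h

lemma Phi_neg (t : ℝ) : Phi (-t) = 1 - Phi t := by
  have hmap : (gaussianReal 0 1).map (fun x => (-1 : ℝ) * x) = gaussianReal 0 1 := by
    have h1 : (NNReal.mk ((-1:ℝ)^2) (sq_nonneg _) * 1 : ℝ≥0) = 1 := by ext; norm_num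
    rw [gaussianReal_map_const_mul, h1]
    norm_num
  have : gaussianReal 0 1 (Set.Iic (-t)) = gaussianReal 0 1 (Set.Ici t) := by
    conv_lhs => rw [← hmap]
    rw [Measure.map_apply (measurable_const_mul _) measurableSet_Iic]
    congr 1
    ext x
    simp only [Set.mem_preimage, Set.mem_Iic, Set.mem_Ici, neg_one_mul]
    constructor <;> intro h <;> linarith
  have hIci : gaussianReal 0 1 (Set.Ici t) = gaussianReal 0 1 (Set.Ioi t) := by
    apply measure_congr
    have hnull : gaussianReal 0 1 {t} = 0 :=
      gaussianReal_absolutelyContinuous 0 one_ne_zero (volume_singleton)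
    rw [Filter.eventuallyEq_set]
    have : ∀ᵐ x ∂(gaussianReal 0 1), x ≠ t := by
      rw [ae_iff]
      simpa using hnull
    filter_upwards [this] with x hx
    simp only [Set.mem_Ici, Set.mem_Ioi, eq_iff_iff]
    exact ⟨fun h => lt_of_le_of_ne h (Ne.symm hx), fun h => h.le⟩
  rw [Phi, this, hIci, Phi_add_Ioi]

lemma Phi_tendsto_atBot : Tendsto Phi atBot (nhds 0) := by
  have h : Tendsto (fun t : ℝ => 1 - Phi (-t)) atBot (nhds 0) := by
    have h2 : Tendsto (fun t : ℝ => Phi (-t)) atBot (nhds 1) :=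
      Phi_tendsto_atTop.comp tendsto_neg_atBot_atTop
    have := h2.const_sub 1
    simpa using this
  convert h using 2 with t
  rw [Phi_neg]; ring

lemma Phi_surj {p : ℝ} (h0 : 0 < p) (h1 : p < 1) : ∃ t, Phi t = p := by
  obtain ⟨a, ha⟩ : ∃ a, Phi a < p := by
    have := Phi_tendsto_atBot.eventually_lt_const h0
    exact this.exists
  obtain ⟨b, hb⟩ : ∃ b, p < Phi b := by
    have := Phi_tendsto_atTop.eventually_const_lt h1
    exact this.exists
  have := intermediate_value_univ a b Phi_continuous
  have hp : p ∈ Set.Icc (Phi a) (Phi b) := ⟨ha.le, hb.le⟩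
  exact this hp

lemma Phi_PhiInv {p : ℝ} (h0 : 0 < p) (h1 : p < 1) : Phi (PhiInv p) = p :=
  Function.invFun_eq (Phi_surj h0 h1)

lemma PhiInv_neg {p : ℝ} (h0 : 0 < p) (h1 : p < 1) : PhiInv (1 - p) = -PhiInv p := by
  apply Phi_strictMono.injective
  rw [Phi_PhiInv (by linarith) (by linarith), Phi_neg, Phi_PhiInv h0 h1]

lemma PhiInv_mono {p q : ℝ} (h0 : 0 < p) (hpq : p ≤ q) (h1 : q < 1) : PhiInv p ≤ PhiInv q := by
  by_contra h
  push_neg at h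
  have := Phi_strictMono h
  rw [Phi_PhiInv h0 (lt_of_le_of_lt hpq h1), Phi_PhiInv (lt_of_lt_of_le h0 hpq) h1] at this
  linarith


lemma gaussianPDFReal_conv (m₁ m₂ : ℝ) {v₁ v₂ : ℝ≥0} (h₁ : v₁ ≠ 0) (h₂ : v₂ ≠ 0) (t : ℝ) :
    ∫ x, gaussianPDFReal m₁ v₁ x * gaussianPDFReal m₂ v₂ (t - x)
      = gaussianPDFReal (m₁ + m₂) (v₁ + v₂) t := by
  have ha : 0 < (v₁ : ℝ) := by exact_mod_cast zero_lt_iff.mpr h₁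
  have hb : 0 < (v₂ : ℝ) := by exact_mod_cast zero_lt_iff.mpr h₂
  set a := (v₁ : ℝ) with haa
  set b := (v₂ : ℝ) with hbb
  have hab : 0 < a + b := by linarith
  set A := (a + b) / (2 * a * b) with hA
  have hApos : 0 < A := by positivity
  set c := (m₁ * b + (t - m₂) * a) / (a + b) with hc
  have key : ∀ x, gaussianPDFReal m₁ v₁ x * gaussianPDFReal m₂ v₂ (t - x)
      = ((Real.sqrt (2 * π * a))⁻¹ * (Real.sqrt (2 * π * b))⁻¹
          * rexp (-(t - (m₁ + m₂)) ^ 2 / (2 * (a + b)))) * rexp (-A * (x - c) ^ 2) := by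
    intro x
    have hexp : -(x - m₁) ^ 2 / (2 * a) + -(t - x - m₂) ^ 2 / (2 * b)
        = -(t - (m₁ + m₂)) ^ 2 / (2 * (a + b)) + -A * (x - c) ^ 2 := by
      rw [hA, hc]
      field_simp
      ring
    rw [gaussianPDFReal, gaussianPDFReal, mul_mul_mul_comm, ← Real.exp_add, hexp,
      Real.exp_add]
    ring
  simp only [key]
  rw [integral_const_mul]
  have hshift : ∫ x : ℝ, rexp (-A * (x - c) ^ 2) = Real.sqrt (π / A) := by
    rw [show (fun x : ℝ => rexp (-A * (x - c) ^ 2))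
        = (fun x : ℝ => (fun y : ℝ => rexp (-A * y ^ 2)) (x - c)) from rfl]
    rw [integral_sub_right_eq_self (fun y : ℝ => rexp (-A * y ^ 2)) c]
    exact integral_gaussian A
  rw [hshift, gaussianPDFReal]
  have hcast : ((v₁ + v₂ : ℝ≥0) : ℝ) = a + b := by push_cast; rfl
  rw [hcast]
  rw [mul_right_comm]
  have hK : (Real.sqrt (2 * π * a))⁻¹ * (Real.sqrt (2 * π * b))⁻¹ * Real.sqrt (π / A)
      = (Real.sqrt (2 * π * (a + b)))⁻¹ := by
    rw [← Real.sqrt_inv, ← Real.sqrt_inv, ← Real.sqrt_inv,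
      ← Real.sqrt_mul (by positivity), ← Real.sqrt_mul (by positivity)]
    congr 1
    rw [hA]
    field_simp
  rw [hK]

lemma gaussianReal_conv (m₁ m₂ : ℝ) (v₁ v₂ : ℝ≥0) :
    Measure.map (fun p : ℝ × ℝ => p.1 + p.2)
        ((gaussianReal m₁ v₁).prod (gaussianReal m₂ v₂))
      = gaussianReal (m₁ + m₂) (v₁ + v₂) := by
  by_cases h₁ : v₁ = 0
  · subst h₁
    rw [gaussianReal_zero_var, Measure.dirac_prod,
      Measure.map_map measurable_add measurable_prodMk_left]
    have : ((fun p : ℝ × ℝ => p.1 + p.2) ∘ (Prod.mk m₁)) = (fun y => m₁ + y) := rfl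
    rw [this, gaussianReal_map_const_add, add_comm m₂ m₁, zero_add]
  by_cases h₂ : v₂ = 0
  · subst h₂
    rw [gaussianReal_zero_var, Measure.prod_dirac,
      Measure.map_map measurable_add measurable_prodMk_right]
    have : ((fun p : ℝ × ℝ => p.1 + p.2) ∘ (fun x : ℝ => (x, m₂))) = (fun y => y + m₂) := rfl
    rw [this, gaussianReal_map_add_const, add_zero]
  -- main case
  have h₁₂ : v₁ + v₂ ≠ 0 := fun h => h₁ (by simpa using (add_eq_zero.mp h).1)
  ext s hs
  rw [Measure.map_apply measurable_add hs, Measure.prod_apply (measurable_add hs)]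
  have hinner : ∀ x : ℝ, gaussianReal m₂ v₂ (Prod.mk x ⁻¹' ((fun p : ℝ × ℝ => p.1 + p.2) ⁻¹' s))
      = ∫⁻ u in s, gaussianPDF m₂ v₂ (u - x) := by
    intro x
    have hpre : (Prod.mk x ⁻¹' ((fun p : ℝ × ℝ => p.1 + p.2) ⁻¹' s))
        = (fun y => x + y) ⁻¹' s := rfl
    have hmeas : MeasurableSet ((fun y => x + y) ⁻¹' s) := hs.preimage (measurable_const_add x)
    rw [hpre, gaussianReal_apply _ h₂, ← lintegral_indicator hmeas]
    have hind : ∀ y : ℝ, ((fun y => x + y) ⁻¹' s).indicator (gaussianPDF m₂ v₂) y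
        = (s.indicator fun u => gaussianPDF m₂ v₂ (u - x)) (x + y) := by
      intro y
      by_cases hy : x + y ∈ s
      · simp [Set.indicator, hy]
      · simp [Set.indicator, hy]
    simp only [hind]
    rw [lintegral_add_left_eq_self (s.indicator fun u => gaussianPDF m₂ v₂ (u - x)) x,
      lintegral_indicator hs]
  simp only [hinner]
  rw [gaussianReal_of_var_ne_zero _ h₁,
    lintegral_withDensity_eq_lintegral_mul_non_measurable _ (measurable_gaussianPDF _ _)
      (ae_of_all _ fun x => ENNReal.ofReal_lt_top)]
  simp only [Pi.mul_apply]
  have hpull : ∀ x : ℝ, gaussianPDF m₁ v₁ x * ∫⁻ u in s, gaussianPDF m₂ v₂ (u - x)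
      = ∫⁻ u in s, gaussianPDF m₁ v₁ x * gaussianPDF m₂ v₂ (u - x) := fun x =>
    (lintegral_const_mul' _ _ ENNReal.ofReal_ne_top).symm
  simp only [hpull]
  rw [lintegral_lintegral_swap (((measurable_gaussianPDF m₁ v₁).comp measurable_fst).mul
    ((measurable_gaussianPDF m₂ v₂).comp (measurable_snd.sub measurable_fst))).aemeasurable]
  have hconv : ∀ u : ℝ, ∫⁻ x, gaussianPDF m₁ v₁ x * gaussianPDF m₂ v₂ (u - x)
      = gaussianPDF (m₁ + m₂) (v₁ + v₂) u := by
    intro u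
    have hint : Integrable (fun x => gaussianPDFReal m₁ v₁ x * gaussianPDFReal m₂ v₂ (u - x)) := by
      have h := (integrable_gaussianPDFReal m₁ v₁).bdd_mul
        (((measurable_gaussianPDFReal m₂ v₂).comp (measurable_const.sub measurable_id)).aestronglyMeasurable)
        (c := (Real.sqrt (2 * π * v₂))⁻¹) (ae_of_all _ fun x => by
          show ‖gaussianPDFReal m₂ v₂ (u - x)‖ ≤ _
          rw [Real.norm_eq_abs, abs_of_nonneg (gaussianPDFReal_nonneg _ _ _)]
          exact gaussianPDFReal_le _ _ _)
      simpa [mul_comm] using h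
    simp only [gaussianPDF, ← ENNReal.ofReal_mul (gaussianPDFReal_nonneg m₁ v₁ _)]
    rw [← ofReal_integral_eq_lintegral_ofReal hint (ae_of_all _ fun x =>
      mul_nonneg (gaussianPDFReal_nonneg _ _ _) (gaussianPDFReal_nonneg _ _ _)),
      gaussianPDFReal_conv m₁ m₂ h₁ h₂ u]
  simp only [hconv]
  rw [← gaussianReal_apply _ h₁₂ s]

lemma map_sum_gaussianPi (σ : ℝ) (hσ : 0 < σ) :
    ∀ (n : ℕ) (m c : Fin n → ℝ),
    Measure.map (fun z : Fin n → ℝ => ∑ i, c i * z i)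
        (Measure.pi fun i => gaussianReal (m i) (Real.toNNReal (σ ^ 2)))
      = gaussianReal (∑ i, c i * m i) (Real.toNNReal (σ ^ 2 * ∑ i, c i ^ 2)) := by
  intro n
  induction n with
  | zero =>
    intro m c
    have h0 : (fun z : Fin 0 → ℝ => ∑ i, c i * z i) = (fun _ => (0 : ℝ)) := by
      funext z; simp
    rw [h0, Measure.map_const, measure_univ, one_smul]
    simp
  | succ n ih =>
    intro m c
    set μ := fun i : Fin (n + 1) => gaussianReal (m i) (Real.toNNReal (σ ^ 2)) with hμ
    have hmp := measurePreserving_piFinSuccAbove μ 0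
    have hL : Measurable (fun w : Fin n → ℝ => ∑ j, c (Fin.succ j) * w j) :=
      Finset.measurable_sum _ (fun j _ => (measurable_pi_apply j).const_mul _)
    have hfun : (fun z : Fin (n + 1) → ℝ => ∑ i, c i * z i)
        = ((fun q : ℝ × ℝ => q.1 + q.2) ∘
            Prod.map (fun t : ℝ => c 0 * t) (fun w : Fin n → ℝ => ∑ j, c (Fin.succ j) * w j))
          ∘ ⇑(MeasurableEquiv.piFinSuccAbove (fun _ : Fin (n + 1) => ℝ) 0) := by
      funext z
      simp only [Function.comp_apply, MeasurableEquiv.piFinSuccAbove, MeasurableEquiv.coe_mk,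
        MeasurableEquiv.piFinSuccAbove_apply, Prod.map, Fin.zero_succAbove]
      rw [Fin.sum_univ_succ]
      rfl
    rw [hfun, ← Measure.map_map (measurable_add.comp
        ((measurable_const_mul _).prodMap hL)) (MeasurableEquiv.measurable _),
      hmp.map_eq,
      ← Measure.map_map measurable_add ((measurable_const_mul _).prodMap hL),
      ← Measure.map_prod_map _ _ (measurable_const_mul _) hL]
    have hrest : (Measure.pi fun j : Fin n => μ ((0 : Fin (n+1)).succAbove j))
        = Measure.pi fun j : Fin n => gaussianReal (m (Fin.succ j)) (Real.toNNReal (σ ^ 2)) := by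
      simp [hμ, Fin.zero_succAbove]
    rw [hrest, ih (fun j => m j.succ) (fun j => c j.succ)]
    simp only [hμ]
    rw [gaussianReal_map_const_mul, gaussianReal_conv]
    congr 1
    · rw [Fin.sum_univ_succ]
    · apply NNReal.coe_injective
      have h1 : (0:ℝ) ≤ σ ^ 2 := sq_nonneg σ
      have h2 : (0:ℝ) ≤ σ ^ 2 * ∑ j : Fin n, c (Fin.succ j) ^ 2 := by positivity
      have h3 : (0:ℝ) ≤ σ ^ 2 * ∑ i : Fin (n+1), c i ^ 2 := by positivity
      push_cast [Real.coe_toNNReal _ h1, Real.coe_toNNReal _ h2, Real.coe_toNNReal _ h3]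
      rw [Fin.sum_univ_succ]
      ring


lemma gaussianReal_map_affine (M : ℝ) (V : ℝ≥0) (a b : ℝ) :
    Measure.map (fun y => a * y + b) (gaussianReal M V)
      = gaussianReal (a * M + b) (⟨a ^ 2, sq_nonneg _⟩ * V) := by
  have h : (fun y : ℝ => a * y + b) = (fun y => y + b) ∘ (fun y => a * y) := rfl
  rw [h, ← Measure.map_map (measurable_add_const b) (measurable_const_mul a),
    gaussianReal_map_const_mul, gaussianReal_map_add_const]
  rfl

lemma gaussianReal_Ioi_toReal (M t : ℝ) :
    (gaussianReal M 1 (Set.Ioi t)).toReal = 1 - Phi (t - M) := by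
  have hmap : (gaussianReal 0 1).map (· + M) = gaussianReal M 1 := by
    rw [gaussianReal_map_add_const, zero_add]
  have hpre : (· + M) ⁻¹' Set.Ioi t = Set.Ioi (t - M) := by
    ext y
    simp only [Set.mem_preimage, Set.mem_Ioi]
    constructor <;> intro h <;> linarith
  rw [← hmap, Measure.map_apply (measurable_add_const M) measurableSet_Ioi, hpre, Phi_add_Ioi]

lemma gaussianReal_Ici_eq_Ioi (M t : ℝ) :
    gaussianReal M 1 (Set.Ici t) = gaussianReal M 1 (Set.Ioi t) := by
  apply measure_congr
  have hnull : gaussianReal M 1 {t} = 0 :=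
    gaussianReal_absolutelyContinuous M one_ne_zero (volume_singleton)
  rw [Filter.eventuallyEq_set]
  have hae : ∀ᵐ y ∂(gaussianReal M 1), y ≠ t := by
    rw [ae_iff]
    simpa using hnull
  filter_upwards [hae] with y hy
  simp only [Set.mem_Ici, Set.mem_Ioi, eq_iff_iff]
  exact ⟨fun h => lt_of_le_of_ne h (Ne.symm hy), fun h => h.le⟩

lemma PhiInvE_mono {p q : ℝ} (h : p ≤ q) : PhiInvE p ≤ PhiInvE q := by
  by_cases hp : p ≤ 0
  · simp [PhiInvE, hp]
  by_cases hq1 : (1 : ℝ) ≤ q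
  · simp [PhiInvE, hq1, not_le.mpr (lt_of_lt_of_le (not_le.mp hp) h), le_top]
  have hq0 : ¬q ≤ 0 := fun hq => hp (h.trans hq)
  have hp1 : ¬(1 : ℝ) ≤ p := fun h1 => hq1 (h1.trans h)
  simp only [PhiInvE, hp, hq0, hq1, hp1, if_false, if_true]
  rw [EReal.coe_le_coe_iff]
  exact PhiInv_mono (not_le.mp hp) h (not_le.mp hq1)

/-- Lemma 8 of the paper: in the slab setting with q₁ = 0, if s ∈ (0,q₂] lies
below every excluded pair (s ≤ q₁ⁱ for all i), then rₓ(0,s) = s and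
r_y(0,s) = Pr(Y ∈ {z : δᵀ(z−x) ≥ σ‖δ‖₂Φ⁻¹(1−s)}) = Φ(Φ⁻¹(s) + ‖δ‖₂/σ)
(under the conventions Φ⁻¹(0) = −∞, Φ⁻¹(1) = +∞). -/
theorem slab_initial_segment_prob
    {d : ℕ} (hd : 1 ≤ d) (σ : ℝ) (hσ : 0 < σ)
    (x δ : Fin d → ℝ) (hδ : δ ≠ 0)
    (q2 : ℝ) (hq12 : 0 < q2) (hq2 : q2 ≤ 1)
    (n : ℕ) (e1 e2 : Fin n → ℝ)
    (he : ∀ i, 0 ≤ e1 i ∧ e1 i ≤ e2 i ∧ e2 i ≤ q2)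
    (C' : Set (Fin d → ℝ))
    (hC' : C' = slab σ x δ 0 q2 \ ⋃ i, slab σ x δ (e1 i) (e2 i))
    (rX rY : ℝ → ℝ → ℝ)
    (hrX : ∀ a b, rX a b = (gaussianVec x σ (C' ∩ slab σ x δ a b)).toReal)
    (hrY : ∀ a b, rY a b = (gaussianVec (x + δ) σ (C' ∩ slab σ x δ a b)).toReal)
    (s : ℝ) (hs0 : 0 < s) (hsq2 : s ≤ q2) (hse : ∀ i, s ≤ e1 i) :
    rX 0 s = s ∧
    rY 0 s = (gaussianVec (x + δ) σ
      {z | PhiInvE (1 - s) ≤ ((dotp δ (z - x) / (σ * l2norm δ) : ℝ) : EReal)}).toReal ∧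
    rY 0 s = PhiE (PhiInvE s + ((l2norm δ / σ : ℝ) : EReal)) := by
  classical
  have hSS : 0 < ∑ i, δ i ^ 2 := by
    have hex : ∃ i, δ i ≠ 0 := by
      by_contra h
      push_neg at h
      exact hδ (funext fun i => h i)
    obtain ⟨i, hi⟩ := hex
    exact Finset.sum_pos' (fun j _ => sq_nonneg _) ⟨i, Finset.mem_univ i, by positivity⟩
  have hN : 0 < l2norm δ := Real.sqrt_pos.mpr hSS
  have hC : 0 < σ * l2norm δ := mul_pos hσ hN
  have hN2 : l2norm δ * l2norm δ = ∑ i, δ i ^ 2 := Real.mul_self_sqrt hSS.le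
  set W : (Fin d → ℝ) → ℝ := fun z => dotp δ (z - x) / (σ * l2norm δ) with hW_def
  have hL : Measurable (fun z : Fin d → ℝ => ∑ i, δ i * z i) :=
    Finset.measurable_sum _ fun i _ => (measurable_pi_apply i).const_mul _
  set a : ℝ := (σ * l2norm δ)⁻¹ with ha
  set b : ℝ := -(∑ i, δ i * x i) / (σ * l2norm δ) with hb
  have hWeq : W = (fun y => a * y + b) ∘ (fun z : Fin d → ℝ => ∑ i, δ i * z i) := by
    funext z
    show dotp δ (z - x) / (σ * l2norm δ) = a * (∑ i, δ i * z i) + b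
    have hd2 : dotp δ (z - x) = (∑ i, δ i * z i) - ∑ i, δ i * x i := by
      rw [dotp, ← Finset.sum_sub_distrib]
      exact Finset.sum_congr rfl fun i _ => by simp [mul_sub]
    rw [hd2, ha, hb]
    field_simp
    ring
  have hW : Measurable W := by
    rw [hWeq]
    exact ((measurable_const_mul a).add_const b).comp hL
  have hvar : (⟨a ^ 2, sq_nonneg _⟩ * Real.toNNReal (σ ^ 2 * ∑ i, δ i ^ 2) : ℝ≥0) = 1 := by
    apply NNReal.coe_injective
    have h3 : (0:ℝ) ≤ σ ^ 2 * ∑ i, δ i ^ 2 := by positivity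
    show a ^ 2 * ((Real.toNNReal (σ ^ 2 * ∑ i, δ i ^ 2) : ℝ)) = ((1 : ℝ≥0) : ℝ)
    push_cast [Real.coe_toNNReal _ h3]
    rw [← hN2, ha]
    field_simp
  have hlaw : ∀ m : Fin d → ℝ, Measure.map W (gaussianVec m σ)
      = gaussianReal (a * (∑ i, δ i * m i) + b) 1 := by
    intro m
    rw [hWeq, ← Measure.map_map ((measurable_const_mul a).add_const b) hL,
      show gaussianVec m σ = Measure.pi (fun i => gaussianReal (m i) (Real.toNNReal (σ ^ 2)))
        from rfl,
      map_sum_gaussianPi σ hσ d m δ, gaussianReal_map_affine, hvar]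
  have hlawX : Measure.map W (gaussianVec x σ) = gaussianReal 0 1 := by
    rw [hlaw x]
    congr 1
    rw [ha, hb]
    field_simp
    ring
  have hlawY : Measure.map W (gaussianVec (x + δ) σ) = gaussianReal (l2norm δ / σ) 1 := by
    rw [hlaw (x + δ)]
    congr 1
    have hsum : ∑ i, δ i * (x + δ) i = (∑ i, δ i * x i) + ∑ i, δ i ^ 2 := by
      simp [Pi.add_apply, mul_add, Finset.sum_add_distrib, pow_two]
    rw [hsum, ← hN2, ha, hb]
    field_simp
    ring
  have hsub : C' ∩ slab σ x δ 0 s = slab σ x δ 0 s := by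
    rw [hC']
    apply Set.inter_eq_right.mpr
    intro z hz
    obtain ⟨hz1, hz2⟩ := hz
    constructor
    · exact ⟨lt_of_le_of_lt (PhiInvE_mono (by linarith)) hz1, hz2⟩
    · simp only [Set.mem_iUnion, not_exists]
      intro i hi
      obtain ⟨hi1, hi2⟩ := hi
      have hlt : PhiInvE (1 - e1 i)
          < ((dotp δ (z - x) / (σ * l2norm δ) : ℝ) : EReal) :=
        lt_of_le_of_lt (PhiInvE_mono (by linarith [hse i])) hz1
      exact absurd hi2 (not_le.mpr hlt)
  rw [hrX, hrY, hsub]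
  have hs1 : s ≤ 1 := hsq2.trans hq2
  rcases lt_or_eq_of_le hs1 with hslt | hseq
  · -- s < 1
    set t₀ := PhiInv (1 - s) with ht₀
    have h1s0 : (0:ℝ) < 1 - s := by linarith
    have h1s1 : (1:ℝ) - s < 1 := by linarith
    have hPhiE1 : PhiInvE (1 - 0) = ⊤ := by
      rw [PhiInvE, if_neg (by norm_num), if_pos (by norm_num)]
    have hPhiEs : PhiInvE (1 - s) = ((t₀ : ℝ) : EReal) := by
      rw [PhiInvE, if_neg (by linarith), if_neg (by linarith)]
    have hslab : slab σ x δ 0 s = W ⁻¹' Set.Ioi t₀ := by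
      ext z
      simp only [slab, Set.mem_setOf_eq, Set.mem_preimage, Set.mem_Ioi, hPhiE1, hPhiEs]
      constructor
      · rintro ⟨h1, _⟩
        exact EReal.coe_lt_coe_iff.mp h1
      · intro h
        exact ⟨EReal.coe_lt_coe_iff.mpr h, le_top⟩
    have hmX : gaussianVec x σ (slab σ x δ 0 s) = gaussianReal 0 1 (Set.Ioi t₀) := by
      rw [hslab, ← Measure.map_apply hW measurableSet_Ioi, hlawX]
    have hmY : gaussianVec (x + δ) σ (slab σ x δ 0 s)
        = gaussianReal (l2norm δ / σ) 1 (Set.Ioi t₀) := by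
      rw [hslab, ← Measure.map_apply hW measurableSet_Ioi, hlawY]
    have hPhit₀ : Phi t₀ = 1 - s := Phi_PhiInv h1s0 h1s1
    refine ⟨?_, ?_, ?_⟩
    · rw [hmX, gaussianReal_Ioi_toReal, sub_zero, hPhit₀]
      ring
    · have hset : {z : Fin d → ℝ | PhiInvE (1 - s)
          ≤ ((dotp δ (z - x) / (σ * l2norm δ) : ℝ) : EReal)} = W ⁻¹' Set.Ici t₀ := by
        ext z
        simp only [Set.mem_setOf_eq, Set.mem_preimage, Set.mem_Ici, hPhiEs,
          EReal.coe_le_coe_iff]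
        exact Iff.rfl
      rw [hmY, hset, ← Measure.map_apply hW measurableSet_Ici, hlawY,
        gaussianReal_Ici_eq_Ioi]
    · rw [hmY]
      have hPs : PhiInvE s = ((PhiInv s : ℝ) : EReal) := by
        rw [PhiInvE, if_neg (by linarith), if_neg (by linarith)]
      rw [hPs, ← EReal.coe_add]
      have hPhiE : PhiE ((PhiInv s + l2norm δ / σ : ℝ) : EReal)
          = Phi (PhiInv s + l2norm δ / σ) := by
        rw [PhiE, if_neg (EReal.coe_ne_bot _), if_neg (EReal.coe_ne_top _), EReal.toReal_coe]
      rw [hPhiE, gaussianReal_Ioi_toReal]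
      have hneg : t₀ = -PhiInv s := PhiInv_neg hs0 hslt
      have harg : t₀ - l2norm δ / σ = -(PhiInv s + l2norm δ / σ) := by
        rw [hneg]; ring
      rw [harg, Phi_neg]
      ring
  · -- s = 1
    subst hseq
    have hslab : slab σ x δ 0 1 = Set.univ := by
      ext z
      simp only [slab, Set.mem_setOf_eq, Set.mem_univ, iff_true]
      refine ⟨?_, ?_⟩
      · rw [show (1:ℝ) - 1 = 0 by ring, PhiInvE, if_pos le_rfl]
        exact EReal.bot_lt_coe _
      · rw [show (1:ℝ) - 0 = 1 by ring, PhiInvE, if_neg (by norm_num), if_pos le_rfl]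
        exact le_top
    have huniv : ∀ m : Fin d → ℝ, gaussianVec m σ Set.univ = 1 := by
      intro m
      have hinst : IsProbabilityMeasure (gaussianVec m σ) := by
        unfold gaussianVec
        infer_instance
      exact measure_univ
    have hset : {z : Fin d → ℝ | PhiInvE (1 - 1)
        ≤ ((dotp δ (z - x) / (σ * l2norm δ) : ℝ) : EReal)} = Set.univ := by
      ext z
      simp only [Set.mem_setOf_eq, Set.mem_univ, iff_true]
      rw [show (1:ℝ) - 1 = 0 by ring, PhiInvE, if_pos le_rfl]
      exact bot_le
    refine ⟨?_, ?_, ?_⟩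
    · rw [hslab, huniv]
      simp
    · rw [hslab, hset, huniv]
    · rw [hslab, huniv,
        show PhiInvE 1 = ⊤ by rw [PhiInvE, if_neg (by norm_num), if_pos le_rfl],
        EReal.top_add_coe, PhiE, if_neg (by simp), if_pos rfl]
      simp
end

section
/- In the slab setting, let q₂° satisfy q₁ ≤ q₂° ≤ q₂ and assume rₓ(q₁, q₂°) > 0. Then r_y(q₁, q₂°) ≥ r_y(q₁, q₂) / ⌈rₓ(q₁, q₂) / rₓ(q₁, q₂°)⌉. -/
open MeasureTheory ProbabilityTheory Real Filter
open scoped NNReal ENNReal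

section AuxLemmas

/-- Auxiliary: marginalizing a product of coordinate functions. -/
lemma lmarginal_prod_aux {d : ℕ} (μ : Fin d → Measure ℝ) [∀ i, SigmaFinite (μ i)]
    (f : Fin d → ℝ → ℝ≥0∞) (hf : ∀ i, Measurable (f i)) (s : Finset (Fin d)) :
    ∀ x : Fin d → ℝ, (∫⋯∫⁻_s, (fun z => ∏ i, f i (z i)) ∂μ) x
      = (∏ i ∈ s, ∫⁻ t, f i t ∂μ i) * ∏ i ∈ sᶜ, f i (x i) := by
  classical
  have hF : Measurable fun z : Fin d → ℝ => ∏ i, f i (z i) :=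
    Finset.measurable_prod _ fun i _ => (hf i).comp (measurable_pi_apply i)
  induction s using Finset.induction_on with
  | empty => intro x; simp
  | insert a s hi ih =>
    intro x
    rw [MeasureTheory.lmarginal_insert _ hF hi]
    have hia : a ∈ sᶜ := Finset.mem_compl.2 hi
    have key : ∀ t : ℝ, (∫⋯∫⁻_s, (fun z => ∏ i, f i (z i)) ∂μ) (Function.update x a t)
        = ((∏ i ∈ s, ∫⁻ u, f i u ∂μ i) * ∏ i ∈ sᶜ.erase a, f i (x i)) * f a t := by
      intro t
      rw [ih]
      rw [← Finset.mul_prod_erase _ _ hia]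
      have hcongr : ∀ i ∈ sᶜ.erase a, f i (Function.update x a t i) = f i (x i) := by
        intro i hi'
        rw [Function.update_of_ne (Finset.ne_of_mem_erase hi')]
      rw [Finset.prod_congr rfl hcongr, Function.update_self]
      ring
    simp_rw [key]
    rw [lintegral_const_mul _ (hf a), Finset.prod_insert hi, Finset.compl_insert]
    ring

/-- Auxiliary: Tonelli for a product of coordinate functions over a product measure. -/
lemma lintegral_pi_prod_aux {d : ℕ} (μ : Fin d → Measure ℝ) [∀ i, SigmaFinite (μ i)]
    (f : Fin d → ℝ → ℝ≥0∞) (hf : ∀ i, Measurable (f i)) :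
    ∫⁻ z, ∏ i, f i (z i) ∂Measure.pi μ = ∏ i, ∫⁻ t, f i t ∂μ i := by
  rw [MeasureTheory.lintegral_eq_lmarginal_univ (fun _ => (0:ℝ))]
  rw [lmarginal_prod_aux μ f hf Finset.univ]
  simp

/-- Auxiliary: shifting a 1-dimensional Gaussian is multiplying by an exponential density. -/
lemma gaussianReal_shift (m c : ℝ) {v : ℝ≥0} (hv : v ≠ 0) :
    gaussianReal (m + c) v = (gaussianReal m v).withDensity
      (fun z => ENNReal.ofReal (Real.exp (c * (z - m) / v - c ^ 2 / (2 * v)))) := by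
  have hvR : (0:ℝ) < (v:ℝ) := by exact_mod_cast pos_iff_ne_zero.mpr hv
  have hg : Measurable fun z : ℝ =>
      ENNReal.ofReal (Real.exp (c * (z - m) / v - c ^ 2 / (2 * v))) := by fun_prop
  rw [gaussianReal_of_var_ne_zero _ hv, gaussianReal_of_var_ne_zero _ hv,
    ← withDensity_mul _ (measurable_gaussianPDF _ _) hg]
  congr 1
  funext z
  simp only [Pi.mul_apply, gaussianPDF]
  rw [← ENNReal.ofReal_mul (gaussianPDFReal_nonneg _ _ _)]
  congr 1
  unfold gaussianPDFReal
  have h2 : rexp (-(z - m) ^ 2 / (2 * (v:ℝ))) * rexp (c * (z - m) / (v:ℝ) - c ^ 2 / (2 * (v:ℝ)))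
      = rexp (-(z - (m + c)) ^ 2 / (2 * (v:ℝ))) := by
    rw [← Real.exp_add]
    congr 1
    field_simp
    ring
  rw [mul_assoc ((√(2 * π * (v:ℝ)))⁻¹), h2]

end AuxLemmas

/-- Auxiliary: shifting the vector Gaussian is multiplying by an exponential density. -/
lemma gaussianVec_shift {d : ℕ} (x δ : Fin d → ℝ) {σ : ℝ} (hσ : 0 < σ) :
    gaussianVec (x + δ) σ = (gaussianVec x σ).withDensity
      (fun z => ENNReal.ofReal (Real.exp (dotp δ (z - x) / σ ^ 2
        - (∑ i, δ i ^ 2) / (2 * σ ^ 2)))) := by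
  classical
  set v : ℝ≥0 := Real.toNNReal (σ ^ 2) with hvdef
  have hv0 : v ≠ 0 := by
    rw [hvdef]
    exact (Real.toNNReal_pos.mpr (by positivity)).ne'
  have hvR : ((v:ℝ)) = σ ^ 2 := Real.coe_toNNReal _ (sq_nonneg σ)
  set g : Fin d → ℝ → ℝ≥0∞ := fun i t =>
    ENNReal.ofReal (Real.exp (δ i * (t - x i) / (v:ℝ) - δ i ^ 2 / (2 * (v:ℝ)))) with hgdef
  have hgm : ∀ i, Measurable (g i) := fun i => by
    rw [hgdef]; fun_prop
  have hprod : (fun z : Fin d → ℝ => ENNReal.ofReal (Real.exp (dotp δ (z - x) / σ ^ 2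
      - (∑ i, δ i ^ 2) / (2 * σ ^ 2)))) = fun z => ∏ i, g i (z i) := by
    funext z
    rw [hgdef]
    simp only []
    rw [← ENNReal.ofReal_prod_of_nonneg (fun i _ => (Real.exp_pos _).le), ← Real.exp_sum]
    congr 1
    rw [hvR]
    unfold dotp
    rw [Finset.sum_sub_distrib, ← Finset.sum_div, ← Finset.sum_div]
    simp [Pi.sub_apply]
  unfold gaussianVec
  rw [← hvdef, hprod]
  refine Measure.pi_eq fun s hs => ?_
  rw [withDensity_apply _ (MeasurableSet.univ_pi hs),
      ← lintegral_indicator (MeasurableSet.univ_pi hs)]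
  have hind : ∀ z : Fin d → ℝ, (Set.univ.pi s).indicator (fun z => ∏ i, g i (z i)) z
      = ∏ i, (s i).indicator (g i) (z i) := by
    intro z
    by_cases hz : z ∈ Set.univ.pi s
    · rw [Set.indicator_of_mem hz]
      exact Finset.prod_congr rfl fun i _ =>
        (Set.indicator_of_mem (hz i (Set.mem_univ i)) _).symm
    · rw [Set.indicator_of_notMem hz]
      rw [Set.mem_univ_pi] at hz
      push_neg at hz
      obtain ⟨i, hi⟩ := hz
      exact (Finset.prod_eq_zero (Finset.mem_univ i) (Set.indicator_of_notMem hi _)).symm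
  rw [lintegral_congr hind,
      lintegral_pi_prod_aux _ _ (fun i => (hgm i).indicator (hs i))]
  refine Finset.prod_congr rfl fun i _ => ?_
  rw [lintegral_indicator (hs i), ← withDensity_apply _ (hs i),
      Pi.add_apply, gaussianReal_shift (x i) (δ i) hv0]

/-- Auxiliary: slabs are measurable. -/
lemma slab_measurableSet {d : ℕ} (σ : ℝ) (x δ : Fin d → ℝ) (a b : ℝ) :
    MeasurableSet (slab σ x δ a b) := by
  have hm : Measurable fun z : Fin d → ℝ =>
      ((dotp δ (z - x) / (σ * l2norm δ) : ℝ) : EReal) := by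
    apply measurable_coe_real_ereal.comp
    apply Measurable.div_const
    unfold dotp
    exact Finset.measurable_sum _ fun i _ =>
      (by fun_prop :
        Measurable fun z : Fin d → ℝ => δ i * (z i - x i))
  exact hm measurableSet_Ioc

set_option maxHeartbeats 2000000 in
/-- Lemma 9 of the paper: in the slab setting, for q₁ ≤ q₂° ≤ q₂ with
rₓ(q₁,q₂°) > 0, one has
r_y(q₁,q₂°) ≥ r_y(q₁,q₂) / ⌈rₓ(q₁,q₂)/rₓ(q₁,q₂°)⌉. -/
theorem slab_pigeonhole_bound
    {d : ℕ} (hd : 1 ≤ d) (σ : ℝ) (hσ : 0 < σ)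
    (x δ : Fin d → ℝ) (hδ : δ ≠ 0)
    (q1 q2 : ℝ) (hq1 : 0 ≤ q1) (hq12 : q1 < q2) (hq2 : q2 ≤ 1)
    (n : ℕ) (e1 e2 : Fin n → ℝ)
    (he : ∀ i, q1 ≤ e1 i ∧ e1 i ≤ e2 i ∧ e2 i ≤ q2)
    (C' : Set (Fin d → ℝ))
    (hC' : C' = slab σ x δ q1 q2 \ ⋃ i, slab σ x δ (e1 i) (e2 i))
    (rX rY : ℝ → ℝ → ℝ)
    (hrX : ∀ a b, rX a b = (gaussianVec x σ (C' ∩ slab σ x δ a b)).toReal)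
    (hrY : ∀ a b, rY a b = (gaussianVec (x + δ) σ (C' ∩ slab σ x δ a b)).toReal)
    (q2o : ℝ) (hq2o : q1 ≤ q2o ∧ q2o ≤ q2) (hpos : 0 < rX q1 q2o) :
    rY q1 q2 / (⌈rX q1 q2 / rX q1 q2o⌉ : ℝ) ≤ rY q1 q2o := by
  classical
  haveI instX : IsProbabilityMeasure (gaussianVec x σ) := by
    unfold gaussianVec; infer_instance
  haveI instY : IsProbabilityMeasure (gaussianVec (x + δ) σ) := by
    unfold gaussianVec; infer_instance
  -- trivial cases
  by_cases hcase1 : 1 ≤ q2o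
  · have hq2eq : q2o = q2 := le_antisymm hq2o.2 (le_trans hq2 hcase1)
    rw [hq2eq] at hpos ⊢
    rw [div_self hpos.ne', Int.ceil_one]
    norm_num
  by_cases hcase0 : q2o ≤ 0
  · exfalso
    have hempty : slab σ x δ q1 q2o = ∅ := by
      ext z
      simp only [slab, Set.mem_setOf_eq, Set.mem_empty_iff_false, iff_false, not_and]
      intro hzz
      exfalso
      have htop : PhiInvE (1 - q2o) = ⊤ := by
        unfold PhiInvE
        rw [if_neg (by linarith), if_pos (by linarith)]
      rw [htop] at hzz
      exact not_top_lt hzz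
    rw [hrX, hempty] at hpos
    simp at hpos
  push_neg at hcase1 hcase0
  -- main case : 0 < q2o < 1
  set τ : ℝ := PhiInv (1 - q2o) with hτdef
  have hτE : PhiInvE (1 - q2o) = (τ : EReal) := by
    unfold PhiInvE
    rw [if_neg (by linarith), if_neg (by linarith)]
  set μX := gaussianVec x σ with hμX
  set μY := gaussianVec (x + δ) σ with hμY
  set L : ℝ := l2norm δ with hLdef
  have hL0 : 0 < L := by
    rw [hLdef]
    unfold l2norm
    apply Real.sqrt_pos.2
    have hex : ∃ i, δ i ≠ 0 := by
      by_contra h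
      push_neg at h
      exact hδ (funext h)
    obtain ⟨i, hi⟩ := hex
    exact Finset.sum_pos' (fun j _ => sq_nonneg _) ⟨i, Finset.mem_univ i, by positivity⟩
  have hσL : 0 < σ * L := mul_pos hσ hL0
  set c0 : ℝ := (∑ i, δ i ^ 2) / (2 * σ ^ 2) with hc0
  set D : (Fin d → ℝ) → ℝ≥0∞ :=
    fun z => ENNReal.ofReal (Real.exp (dotp δ (z - x) / σ ^ 2 - c0)) with hDdef
  have hshift : μY = μX.withDensity D := gaussianVec_shift x δ hσ
  -- the two pieces
  set A := C' ∩ slab σ x δ q1 q2o with hA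
  set B := C' ∩ slab σ x δ q2o q2 with hB
  have mC' : MeasurableSet C' := by
    rw [hC']
    exact (slab_measurableSet σ x δ q1 q2).diff
      (MeasurableSet.iUnion fun i => slab_measurableSet σ x δ (e1 i) (e2 i))
  have mA : MeasurableSet A := mC'.inter (slab_measurableSet σ x δ q1 q2o)
  have mB : MeasurableSet B := mC'.inter (slab_measurableSet σ x δ q2o q2)
  have mF : MeasurableSet (C' ∩ slab σ x δ q1 q2) :=
    mC'.inter (slab_measurableSet σ x δ q1 q2)
  have hC'sub : C' ⊆ slab σ x δ q1 q2 := by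
    rw [hC']; exact Set.diff_subset
  have hsubA : A ⊆ C' ∩ slab σ x δ q1 q2 := fun z hz => ⟨hz.1, hC'sub hz.1⟩
  have hsubB : B ⊆ C' ∩ slab σ x δ q1 q2 := fun z hz => ⟨hz.1, hC'sub hz.1⟩
  have hcover : C' ∩ slab σ x δ q1 q2 ⊆ A ∪ B := by
    rintro z ⟨hzC, hz1, hz2⟩
    by_cases ht : (τ : EReal) < ((dotp δ (z - x) / (σ * l2norm δ) : ℝ) : EReal)
    · exact Or.inl ⟨hzC, hτE ▸ ht, hz2⟩
    · exact Or.inr ⟨hzC, hz1, hτE ▸ (not_lt.1 ht)⟩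
  have hdisj : Disjoint A B := by
    rw [Set.disjoint_left]
    rintro z hzA hzB
    have h1 : (τ : EReal) < ((dotp δ (z - x) / (σ * l2norm δ) : ℝ) : EReal) :=
      hτE ▸ hzA.2.1
    have h2 : ((dotp δ (z - x) / (σ * l2norm δ) : ℝ) : EReal) ≤ (τ : EReal) :=
      hτE ▸ hzB.2.2
    exact absurd (h1.trans_le h2) (lt_irrefl _)
  -- density bounds
  set K : ℝ := Real.exp (τ * L / σ - c0) with hKdef
  have hKpos : 0 < K := Real.exp_pos _
  have hBle : ∀ z ∈ B, D z ≤ ENNReal.ofReal K := by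
    intro z hz
    have h2 : ((dotp δ (z - x) / (σ * L) : ℝ) : EReal) ≤ (τ : EReal) := hτE ▸ hz.2.2
    have h3 : dotp δ (z - x) / (σ * L) ≤ τ := EReal.coe_le_coe_iff.1 h2
    have h4 : dotp δ (z - x) ≤ τ * (σ * L) := (div_le_iff₀ hσL).1 h3
    apply ENNReal.ofReal_le_ofReal
    apply Real.exp_le_exp.2
    have h5 : dotp δ (z - x) / σ ^ 2 ≤ τ * L / σ := by
      rw [div_le_div_iff₀ (by positivity) hσ]
      nlinarith [mul_le_mul_of_nonneg_right h4 hσ.le]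
    linarith
  have hAge : ∀ z ∈ A, ENNReal.ofReal K ≤ D z := by
    intro z hz
    have h2 : (τ : EReal) < ((dotp δ (z - x) / (σ * L) : ℝ) : EReal) := hτE ▸ hz.2.1
    have h3 : τ ≤ dotp δ (z - x) / (σ * L) := (EReal.coe_lt_coe_iff.1 h2).le
    have h4 : τ * (σ * L) ≤ dotp δ (z - x) := (le_div_iff₀ hσL).1 h3
    apply ENNReal.ofReal_le_ofReal
    apply Real.exp_le_exp.2
    have h5 : τ * L / σ ≤ dotp δ (z - x) / σ ^ 2 := by
      rw [div_le_div_iff₀ hσ (by positivity)]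
      nlinarith [mul_le_mul_of_nonneg_right h4 hσ.le]
    linarith
  -- measure bounds
  have hYB : μY B ≤ ENNReal.ofReal K * μX B := by
    rw [hshift, withDensity_apply _ mB]
    calc ∫⁻ z in B, D z ∂μX ≤ ∫⁻ _ in B, ENNReal.ofReal K ∂μX :=
          setLIntegral_mono' mB hBle
      _ = ENNReal.ofReal K * μX B := setLIntegral_const _ _
  have hYA : ENNReal.ofReal K * μX A ≤ μY A := by
    rw [hshift, withDensity_apply _ mA]
    calc ENNReal.ofReal K * μX A = ∫⁻ _ in A, ENNReal.ofReal K ∂μX :=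
          (setLIntegral_const _ _).symm
      _ ≤ ∫⁻ z in A, D z ∂μX := setLIntegral_mono' mA hAge
  have hXfull : μX A + μX B ≤ μX (C' ∩ slab σ x δ q1 q2) := by
    rw [← measure_union hdisj mB]
    exact measure_mono (Set.union_subset hsubA hsubB)
  have hYfull : μY (C' ∩ slab σ x δ q1 q2) ≤ μY A + μY B :=
    (measure_mono hcover).trans (measure_union_le A B)
  have hXA : μX A ≤ μX (C' ∩ slab σ x δ q1 q2) := measure_mono hsubA
  -- convert to reals
  have hnetop : ∀ (μ : Measure (Fin d → ℝ)) [IsProbabilityMeasure μ]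
      (S : Set (Fin d → ℝ)), μ S ≠ ⊤ := fun μ _ S => measure_ne_top μ S
  set xA := (μX A).toReal with hxA
  set xB := (μX B).toReal with hxB
  set yA := (μY A).toReal with hyA
  set yB := (μY B).toReal with hyB
  set R := (μX (C' ∩ slab σ x δ q1 q2)).toReal with hR
  set Ry := (μY (C' ∩ slab σ x δ q1 q2)).toReal with hRy
  have erX : rX q1 q2o = xA := by rw [hrX]
  have erX2 : rX q1 q2 = R := by rw [hrX]
  have erY : rY q1 q2o = yA := by rw [hrY]
  have erY2 : rY q1 q2 = Ry := by rw [hrY]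
  have hposA : 0 < xA := by rwa [erX] at hpos
  -- real inequalities
  have ryB : yB ≤ K * xB := by
    have := ENNReal.toReal_mono (by
      exact ENNReal.mul_ne_top ENNReal.ofReal_ne_top (measure_ne_top _ _)) hYB
    rwa [ENNReal.toReal_mul, ENNReal.toReal_ofReal hKpos.le] at this
  have ryA : K * xA ≤ yA := by
    have := ENNReal.toReal_mono (measure_ne_top _ _) hYA
    rwa [ENNReal.toReal_mul, ENNReal.toReal_ofReal hKpos.le] at this
  have rXfull : xA + xB ≤ R := by
    have := ENNReal.toReal_mono (measure_ne_top _ _) hXfull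
    rwa [ENNReal.toReal_add (measure_ne_top _ _) (measure_ne_top _ _)] at this
  have rYfull : Ry ≤ yA + yB := by
    have := ENNReal.toReal_mono (by
      exact ENNReal.add_ne_top.2 ⟨measure_ne_top _ _, measure_ne_top _ _⟩) hYfull
    rwa [ENNReal.toReal_add (measure_ne_top _ _) (measure_ne_top _ _)] at this
  have rXA : xA ≤ R := ENNReal.toReal_mono (measure_ne_top _ _) hXA
  have hxBpos : 0 ≤ xB := ENNReal.toReal_nonneg
  have hyApos : 0 ≤ yA := ENNReal.toReal_nonneg
  -- the ceiling
  rw [erX, erX2, erY, erY2]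
  have hRdiv : 0 < R / xA := div_pos (lt_of_lt_of_le hposA rXA) hposA
  have hNint : (1:ℤ) ≤ ⌈R / xA⌉ := Int.one_le_ceil_iff.2 hRdiv
  have hN1 : (1:ℝ) ≤ (⌈R / xA⌉ : ℝ) := by exact_mod_cast hNint
  have hN0 : (0:ℝ) < (⌈R / xA⌉ : ℝ) := by linarith
  have hRN : R ≤ (⌈R / xA⌉ : ℝ) * xA := by
    have hc := Int.le_ceil (R / xA)
    calc R = (R / xA) * xA := by field_simp
      _ ≤ (⌈R / xA⌉ : ℝ) * xA := mul_le_mul_of_nonneg_right hc hposA.le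
  rw [div_le_iff₀ hN0]
  set N : ℝ := (⌈R / xA⌉ : ℝ)
  have step1 : K * xB ≤ K * ((N - 1) * xA) := by
    apply mul_le_mul_of_nonneg_left _ hKpos.le
    nlinarith
  have step2 : (N - 1) * (K * xA) ≤ (N - 1) * yA :=
    mul_le_mul_of_nonneg_left ryA (by linarith)
  nlinarith
end

section
/- Let m ≥ 1 be an integer, α ∈ [0,1), and ρ ∈ (0,1). Let z_1,…,z_m ∈ {0,1} be fixed and let Y_1,…,Y_m be independent {0,1}-valued random variables such that Pr(Y_i = 1) ≤ α whenever z_i = 0. Then with probability at least 1 − ρ, (1/m)·Σ_{i=1}^m z_i ≥ (1/(1−α))·( (1/m)·Σ_{i=1}^m Y_i − α − √(2α(1−α)·ln(1/ρ)/m) − ln(1/ρ)/(3m) ). -/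
open MeasureTheory ProbabilityTheory Real

private lemma nonneg_of_deriv (f f' : ℝ → ℝ)
    (hd : ∀ x ∈ Set.Ici (0:ℝ), HasDerivAt f (f' x) x)
    (h0 : f 0 = 0) (hf' : ∀ x ∈ Set.Ici (0:ℝ), 0 ≤ f' x) :
    ∀ x, 0 ≤ x → 0 ≤ f x := by
  intro x hx
  have hmono : MonotoneOn f (Set.Ici 0) := by
    apply monotoneOn_of_deriv_nonneg (convex_Ici 0)
    · exact fun y hy => (hd y hy).continuousAt.continuousWithinAt
    · intro y hy
      rw [interior_Ici] at hy
      exact (hd y (Set.mem_Ici.mpr (le_of_lt (Set.mem_Ioi.mp hy)))).differentiableAt.differentiableWithinAt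
    · intro y hy
      rw [interior_Ici] at hy
      rw [(hd y (Set.mem_Ici.mpr (Set.mem_Ioi.mp hy).le)).deriv]
      exact hf' y (Set.mem_Ici.mpr (Set.mem_Ioi.mp hy).le)
  have h := hmono Set.self_mem_Ici (show x ∈ Set.Ici (0:ℝ) from Set.mem_Ici.mpr hx) hx
  rw [h0] at h
  exact h

private lemma exp_taylor_bound {x : ℝ} (hx : 0 ≤ x) (hx3 : x < 3) :
    Real.exp x - 1 - x ≤ x^2 / (2*(1 - x/3)) := by
  have h3 : (0:ℝ) < 1 - x/3 := by linarith
  rw [le_div_iff₀ (by linarith : (0:ℝ) < 2*(1-x/3))]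
  have H2 : ∀ y, 0 ≤ y → 0 ≤ 1 - Real.exp y + y * Real.exp y := by
    apply nonneg_of_deriv _ (fun y => y * Real.exp y)
    · intro y _
      have h := ((Real.hasDerivAt_exp y).const_sub 1).add
        ((hasDerivAt_id y).mul (Real.hasDerivAt_exp y))
      simp only [id_eq] at h
      refine h.congr_deriv ?_
      ring
    · simp
    · intro y hy
      exact mul_nonneg hy (Real.exp_nonneg y)
  have H1 : ∀ y, 0 ≤ y → 0 ≤ y * (1 + Real.exp y) - 2 * (Real.exp y - 1) := by
    apply nonneg_of_deriv _ (fun y => 1 - Real.exp y + y * Real.exp y)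
    · intro y _
      have h := ((hasDerivAt_id y).mul ((Real.hasDerivAt_exp y).const_add 1)).sub
        (((Real.hasDerivAt_exp y).sub_const 1).const_mul 2)
      simp only [id_eq] at h
      refine h.congr_deriv ?_
      ring
    · simp
    · exact H2
  have H0 : ∀ y, 0 ≤ y → 0 ≤ 3 * y^2 / 2 - (Real.exp y - 1 - y) * (3 - y) := by
    apply nonneg_of_deriv _ (fun y => y * (1 + Real.exp y) - 2 * (Real.exp y - 1))
    · intro y _
      have h := (((hasDerivAt_pow 2 y).const_mul (3:ℝ)).div_const 2).sub
        ((((Real.hasDerivAt_exp y).sub_const 1).sub (hasDerivAt_id y)).mul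
          ((hasDerivAt_id y).const_sub 3))
      simp only [id_eq] at h
      refine h.congr_deriv ?_
      simp only [Pi.sub_apply, id_eq, Nat.cast_ofNat]
      ring
    · norm_num
    · exact H1
  nlinarith [H0 x hx]

private lemma nonneg_of_deriv' (f f' : ℝ → ℝ)
    (hd : ∀ x ∈ Set.Ici (0:ℝ), HasDerivAt f (f' x) x)
    (h0 : f 0 = 0) (hf' : ∀ x ∈ Set.Ici (0:ℝ), 0 ≤ f' x) :
    ∀ x, 0 ≤ x → 0 ≤ f x := by
  intro x hx
  have hmono : MonotoneOn f (Set.Ici 0) := by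
    apply monotoneOn_of_deriv_nonneg (convex_Ici 0)
    · exact fun y hy => (hd y hy).continuousAt.continuousWithinAt
    · intro y hy
      rw [interior_Ici] at hy
      exact (hd y (Set.mem_Ici.mpr (le_of_lt (Set.mem_Ioi.mp hy)))).differentiableAt.differentiableWithinAt
    · intro y hy
      rw [interior_Ici] at hy
      rw [(hd y (Set.mem_Ici.mpr (Set.mem_Ioi.mp hy).le)).deriv]
      exact hf' y (Set.mem_Ici.mpr (Set.mem_Ioi.mp hy).le)
  have h := hmono Set.self_mem_Ici (show x ∈ Set.Ici (0:ℝ) from Set.mem_Ici.mpr hx) hx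
  rw [h0] at h
  exact h

private lemma log_bound {a u : ℝ} (ha0 : 0 ≤ a) (ha1 : a ≤ 1) (hu : 0 ≤ u) :
    Real.log (1 + a*u) ≤ a^2 * Real.log (1+u) + a*(1-a)*u := by
  have key : ∀ x, 0 ≤ x →
      0 ≤ a^2 * Real.log (1+x) + a*(1-a)*x - Real.log (1+a*x) := by
    apply nonneg_of_deriv' _
      (fun x => a^2 * (1/(1+x)) + a*(1-a) - a * (1/(1+a*x)))
    · intro x hxx
      have hx : (0:ℝ) ≤ x := hxx
      have h1 : (0:ℝ) < 1 + x := by linarith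
      have h2 : (0:ℝ) < 1 + a*x := by nlinarith
      have d1 : HasDerivAt (fun x : ℝ => Real.log (1+x)) (1/(1+x)) x := by
        have := (((hasDerivAt_id x).const_add 1).log h1.ne')
        simpa using this
      have d2 : HasDerivAt (fun x : ℝ => Real.log (1+a*x)) (a/(1+a*x)) x := by
        have := ((((hasDerivAt_id x).const_mul a).const_add 1).log h2.ne')
        simpa using this
      have h := ((d1.const_mul (a^2)).add
        ((hasDerivAt_id x).const_mul (a*(1-a)))).sub d2
      simp only [id_eq] at h
      refine h.congr_deriv ?_
      ring
    · simp
    · intro x hxx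
      have hx : (0:ℝ) ≤ x := hxx
      have h1 : (0:ℝ) < 1 + x := by linarith
      have h2 : (0:ℝ) < 1 + a*x := by nlinarith
      have heq : a^2 * (1/(1+x)) + a*(1-a) - a * (1/(1+a*x))
          = a^2*(1-a)*x^2 / ((1+x)*(1+a*x)) := by
        field_simp
        ring
      rw [heq]
      exact div_nonneg (mul_nonneg (mul_nonneg (sq_nonneg a) (by linarith)) (sq_nonneg x)) (le_of_lt (mul_pos h1 h2))
  linarith [key u hu]
open MeasureTheory ProbabilityTheory Real

private lemma alg_iden {a b : ℝ} (ha : 0 < a) (hb : 0 < b) :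
    a^2 * ((3*b/(3*a+b))^2/(2*(1-(3*b/(3*a+b))/3))) =
      (3*b/(3*a+b)) * (a*b + (b^2/2)/3) - b^2/2 := by
  have hden : (0:ℝ) < 3*a+b := by linarith
  have h13 : 1 - (3*b/(3*a+b))/3 = 3*a/(3*a+b) := by
    field_simp
    ring
  rw [h13]
  field_simp
  ring

set_option maxHeartbeats 1000000 in
private lemma chernoff_core {Ω : Type*} [MeasurableSpace Ω] (P : Measure Ω)
    [IsProbabilityMeasure P] (m : ℕ) (hm : 1 ≤ m) (α L : ℝ)
    (hα : α ∈ Set.Ico (0 : ℝ) 1) (hL : 0 < L) (S : Finset (Fin m))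
    (Y : Fin m → Ω → ℝ) (hYmeas : ∀ i, Measurable (Y i))
    (hYval : ∀ i ω, Y i ω = 0 ∨ Y i ω = 1)
    (hYindep : iIndepFun Y P)
    (hp : ∀ i ∈ S, (P {ω | Y i ω = 1}).toReal ≤ α) :
    (P {ω | α * S.card + (Real.sqrt (2*((m:ℝ)*α*(1-α))*L) + L/3)
        ≤ ∑ i ∈ S, Y i ω}).toReal ≤ Real.exp (-L) := by
  have hβ : (0:ℝ) < 1 - α := by linarith [hα.2]
  have hm' : (0:ℝ) < m := by exact_mod_cast hm
  rcases hα.1.eq_or_lt with hα0 | hα0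
  · -- α = 0 case
    have hv0 : 2*((m:ℝ)*α*(1-α))*L = 0 := by rw [← hα0]; ring
    have hzero : ∀ i ∈ S, P {ω | Y i ω = 1} = 0 := by
      intro i hi
      have h1 := hp i hi
      rw [← hα0] at h1
      have h2 : (P {ω | Y i ω = 1}).toReal = 0 :=
        le_antisymm h1 ENNReal.toReal_nonneg
      exact ((ENNReal.toReal_eq_zero_iff _).mp h2).resolve_right (measure_ne_top P _)
    have hset : {ω | α * S.card + (Real.sqrt (2*((m:ℝ)*α*(1-α))*L) + L/3)
        ≤ ∑ i ∈ S, Y i ω} ⊆ ⋃ i ∈ S, {ω | Y i ω = 1} := by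
      intro ω hω
      simp only [Set.mem_setOf_eq] at hω
      by_contra hc
      simp only [Set.mem_iUnion, Set.mem_setOf_eq, not_exists] at hc
      have hsum : ∑ i ∈ S, Y i ω = 0 :=
        Finset.sum_eq_zero fun i hi => (hYval i ω).resolve_right (hc i hi)
      rw [hsum, hv0, ← hα0] at hω
      simp [Real.sqrt_zero] at hω
      linarith
    have hPF : P {ω | α * S.card + (Real.sqrt (2*((m:ℝ)*α*(1-α))*L) + L/3)
        ≤ ∑ i ∈ S, Y i ω} = 0 := by
      refine le_antisymm ?_ (zero_le)
      refine le_trans (measure_mono hset) ?_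
      refine le_trans (measure_biUnion_finset_le S _) ?_
      rw [Finset.sum_eq_zero hzero]
    rw [hPF]
    simp [Real.exp_nonneg]
  · -- α > 0 case
    set v : ℝ := (m:ℝ)*α*(1-α) with hv_def
    have hv : 0 < v := by positivity
    have h2L : (0:ℝ) < 2*L := by linarith
    set a : ℝ := Real.sqrt v with ha_def
    set b : ℝ := Real.sqrt (2*L) with hb_def
    have ha : 0 < a := Real.sqrt_pos.mpr hv
    have hb : 0 < b := Real.sqrt_pos.mpr h2L
    have ha2 : a^2 = v := Real.sq_sqrt hv.le
    have hb2 : b^2 = 2*L := Real.sq_sqrt h2L.le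
    have hden : (0:ℝ) < 3*a + b := by linarith
    set lam : ℝ := 3*b/(3*a+b) with hlam_def
    have hlam0 : 0 < lam := by positivity
    have hlam3 : lam < 3 := by
      rw [hlam_def, div_lt_iff₀ hden]; linarith
    have h13 : (0:ℝ) < 1 - lam/3 := by linarith
    set u : ℝ := Real.exp lam - 1 with hu_def
    have hu0 : 0 ≤ u := by
      have := Real.one_le_exp hlam0.le
      simp only [hu_def]; linarith
    set s : ℝ := Real.sqrt (2*v*L) + L/3 with hs_def
    have hsab : Real.sqrt (2*v*L) = a*b := by
      rw [show 2*v*L = v*(2*L) by ring, Real.sqrt_mul hv.le]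
    -- integrability of Y i
    have hYint : ∀ i, Integrable (Y i) P := by
      intro i
      refine ⟨(hYmeas i).aestronglyMeasurable, HasFiniteIntegral.of_bounded (C := 1) ?_⟩
      refine ae_of_all _ fun ω => ?_
      rcases hYval i ω with h | h <;> simp [h]
    -- integral of Y i
    have hint_Y : ∀ i, ∫ ω, Y i ω ∂P = (P {ω | Y i ω = 1}).toReal := by
      intro i
      have hms : MeasurableSet {ω | Y i ω = 1} := hYmeas i (measurableSet_singleton 1)
      have heq : (fun ω => Y i ω) = Set.indicator {ω | Y i ω = 1} (fun _ => (1:ℝ)) := by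
        funext ω
        rcases hYval i ω with h | h
        · simp [Set.indicator, h]
        · simp [Set.indicator, h]
      rw [heq, integral_indicator_const (1:ℝ) hms]
      simp
      rfl
    -- mgf of each Y i
    have hmgf : ∀ i, mgf (Y i) P lam = 1 + u * (P {ω | Y i ω = 1}).toReal := by
      intro i
      rw [mgf]
      have heq : (fun ω => Real.exp (lam * Y i ω)) = fun ω => 1 + u * Y i ω := by
        funext ω
        rcases hYval i ω with h | h
        · simp [h]
        · rw [h]; simp [hu_def]
      rw [heq, integral_add (integrable_const 1) ((hYint i).const_mul u),
        integral_const, MeasureTheory.integral_const_mul, hint_Y i]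
      simp
    -- integrability of exp (lam * sum)
    have hcard : (S.card : ℝ) ≤ m := by
      have := Finset.card_le_univ S
      simp only [Finset.card_univ, Fintype.card_fin] at this
      exact_mod_cast this
    have hXle : ∀ ω, (∑ i ∈ S, Y i ω) ≤ (m:ℝ) := by
      intro ω
      refine le_trans (Finset.sum_le_card_nsmul S _ 1 fun i _ => ?_) ?_
      · rcases hYval i ω with h | h <;> simp [h]
      · simp only [nsmul_eq_mul, mul_one]; exact hcard
    have hXnn : ∀ ω, 0 ≤ (∑ i ∈ S, Y i ω) := by
      intro ω
      refine Finset.sum_nonneg fun i _ => ?_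
      rcases hYval i ω with h | h <;> simp [h]
    have hint : Integrable (fun ω => Real.exp (lam * ∑ i ∈ S, Y i ω)) P := by
      refine ⟨Measurable.aestronglyMeasurable ?_,
        HasFiniteIntegral.of_bounded (C := Real.exp (lam * m)) (ae_of_all _ fun ω => ?_)⟩
      · exact ((Finset.measurable_sum S fun i _ => hYmeas i).const_mul lam).exp
      · rw [Real.norm_eq_abs, abs_of_pos (Real.exp_pos _)]
        exact Real.exp_le_exp.mpr (mul_le_mul_of_nonneg_left (hXle ω) hlam0.le)
    -- Chernoff
    have hch := measure_ge_le_exp_mul_mgf (μ := P) (X := fun ω => ∑ i ∈ S, Y i ω)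
      (t := lam) (α * S.card + s) hlam0.le hint
    have hXeq : (fun ω => ∑ i ∈ S, Y i ω) = ∑ i ∈ S, Y i := by
      funext ω; simp [Finset.sum_apply]
    have hprod_eq : mgf (fun ω => ∑ i ∈ S, Y i ω) P lam = ∏ i ∈ S, mgf (Y i) P lam := by
      rw [hXeq]; exact hYindep.mgf_sum hYmeas S
    rw [hprod_eq] at hch
    have h1ua : (0:ℝ) < 1 + u * α := by
      have := mul_nonneg hu0 hα.1
      linarith
    have hprodle : ∏ i ∈ S, mgf (Y i) P lam ≤ (1 + u*α)^S.card := by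
      rw [← Finset.prod_const]
      refine Finset.prod_le_prod (fun i hi => ?_) (fun i hi => ?_)
      · rw [hmgf i]
        have h := mul_nonneg hu0 (ENNReal.toReal_nonneg (a := P {ω | Y i ω = 1}))
        linarith
      · rw [hmgf i]
        exact add_le_add_right (mul_le_mul_of_nonneg_left (hp i hi) hu0) 1
    have hpow : (1 + u*α)^S.card = Real.exp (S.card * Real.log (1 + u*α)) := by
      rw [Real.exp_nat_mul, Real.exp_log h1ua]
    -- scalar estimates
    set N : ℝ := (S.card : ℝ) with hN_def
    set f : ℝ := Real.log (1 + u*α) with hf_def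
    have hNnn : 0 ≤ N := by positivity
    have hf_ge : lam * α ≤ f := by
      have hconv := convexOn_exp.2 (Set.mem_univ (0:ℝ)) (Set.mem_univ lam)
        (by linarith : (0:ℝ) ≤ 1 - α) hα0.le (by ring)
      simp only [smul_eq_mul, mul_zero, zero_add, Real.exp_zero, mul_one] at hconv
      have h2 : Real.exp (α * lam) ≤ 1 + u * α := by
        simp only [hu_def]
        have hr : (1-α) + α * Real.exp lam = 1 + (Real.exp lam - 1) * α := by ring
        linarith [hconv]
      have := Real.log_le_log (Real.exp_pos _) h2
      rw [Real.log_exp] at this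
      simpa [hf_def, mul_comm] using this
    have hfA : f ≤ α^2*lam + α*(1-α)*u := by
      have hlog := log_bound hα.1 hα.2.le hu0
      have hlu : Real.log (1+u) = lam := by
        rw [show (1:ℝ) + u = Real.exp lam by simp [hu_def], Real.log_exp]
      rw [hlu] at hlog
      simpa [hf_def, mul_comm] using hlog
    have hphi : u - lam ≤ lam^2/(2*(1-lam/3)) := by
      have := exp_taylor_bound hlam0.le hlam3
      simp only [hu_def]; linarith
    have hLb : b^2/2 = L := by linarith [hb2]
    have halg : v * (lam^2/(2*(1-lam/3))) ≤ lam * s - L := by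
      have h := alg_iden ha hb
      rw [ha2] at h
      refine le_of_eq ?_
      calc v * (lam^2/(2*(1-lam/3)))
          = (3*b/(3*a+b)) * (a*b + (b^2/2)/3) - b^2/2 := by rw [hlam_def]; exact h
        _ = lam * s - L := by rw [hs_def, hsab, hlam_def, hLb]
    -- combine
    have hchain : N * (f - lam*α) ≤ lam * s - L := by
      have h1 : N * (f - lam*α) ≤ (m:ℝ) * (f - lam*α) :=
        mul_le_mul_of_nonneg_right hcard (by linarith)
      have h2 : (m:ℝ) * (f - lam*α) ≤ (m:ℝ) * (α*(1-α)*(u - lam)) := by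
        refine mul_le_mul_of_nonneg_left ?_ hm'.le
        have hr : α^2*lam + α*(1-α)*u - lam*α = α*(1-α)*(u - lam) := by ring
        linarith [hfA]
      have h3 : (m:ℝ) * (α*(1-α)*(u - lam)) = v * (u - lam) := by
        rw [hv_def]; ring
      have h4 : v * (u - lam) ≤ v * (lam^2/(2*(1-lam/3))) :=
        mul_le_mul_of_nonneg_left hphi hv.le
      exact le_trans h1 (le_trans h2 (le_trans (le_of_eq h3) (le_trans h4 halg)))
    refine le_trans hch (le_trans
      (mul_le_mul_of_nonneg_left hprodle (Real.exp_nonneg _)) ?_)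
    rw [hpow, ← Real.exp_add, Real.exp_le_exp]
    have hr : -lam * (α * N + s) + N * f = N*(f - lam*α) - lam*s + lam*α*N - lam*α*N := by ring
    linarith [hchain]
/-- The concentration lemma (Lemma 11 of the paper, from Cohen et al.) used to
convert approximate certified top-k accuracy into a high-probability lower
bound on the true certified top-k accuracy: if z₁,…,z_m ∈ {0,1} are fixed and
Y₁,…,Y_m are independent {0,1}-valued random variables with Pr(Y_i = 1) ≤ α
whenever z_i = 0, then with probability at least 1 − ρ,
(1/m)Σ z_i ≥ (1/(1−α))·((1/m)Σ Y_i − α − √(2α(1−α)ln(1/ρ)/m) − ln(1/ρ)/(3m)). -/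
theorem certified_accuracy_concentration
    {Ω : Type*} [MeasurableSpace Ω] (P : Measure Ω) [IsProbabilityMeasure P]
    (m : ℕ) (hm : 1 ≤ m) (α : ℝ) (hα : α ∈ Set.Ico (0 : ℝ) 1)
    (ρ : ℝ) (hρ : ρ ∈ Set.Ioo (0 : ℝ) 1)
    (z : Fin m → ℝ) (hz : ∀ i, z i = 0 ∨ z i = 1)
    (Y : Fin m → Ω → ℝ) (hYmeas : ∀ i, Measurable (Y i))
    (hYval : ∀ i ω, Y i ω = 0 ∨ Y i ω = 1)
    (hYindep : iIndepFun Y P)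
    (hYbound : ∀ i, z i = 0 → (P {ω | Y i ω = 1}).toReal ≤ α) :
    1 - ρ ≤ (P {ω |
      (1 / (1 - α)) * ((1 / (m : ℝ)) * (∑ i, Y i ω) - α
        - Real.sqrt (2 * α * (1 - α) * Real.log (1 / ρ) / (m : ℝ))
        - Real.log (1 / ρ) / (3 * (m : ℝ)))
      ≤ (1 / (m : ℝ)) * ∑ i, z i}).toReal := by
  classical
  have hβ : (0:ℝ) < 1 - α := by linarith [hα.2]
  have hm' : (0:ℝ) < m := by exact_mod_cast hm
  have hL : 0 < Real.log (1/ρ) := Real.log_pos (one_lt_one_div hρ.1 hρ.2)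
  set L : ℝ := Real.log (1/ρ) with hL_def
  set S : Finset (Fin m) := Finset.univ.filter (fun i => z i = 0) with hS_def
  set N : ℝ := (S.card : ℝ) with hN_def
  have hcore := chernoff_core P m hm α L hα hL S Y hYmeas hYval hYindep
    (fun i hi => hYbound i ((Finset.mem_filter.mp hi).2))
  -- counts
  have hcards : S.card + (Finset.univ.filter (fun i => ¬ z i = 0)).card = m := by
    rw [hS_def, Finset.card_filter_add_card_filter_not, Finset.card_univ,
      Fintype.card_fin]
  have hcardNot : ((Finset.univ.filter (fun i => ¬ z i = 0)).card : ℝ) = (m:ℝ) - N := by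
    rw [hN_def]
    have := hcards
    push_cast [← this]
    ring
  have hzsum : ∑ i, z i = (m:ℝ) - N := by
    have hsplit := Finset.sum_filter_add_sum_filter_not Finset.univ (fun i => z i = 0) z
    have h1 : ∑ i ∈ S, z i = 0 :=
      Finset.sum_eq_zero fun i hi => (Finset.mem_filter.mp hi).2
    have h2 : ∑ i ∈ Finset.univ.filter (fun i => ¬ z i = 0), z i
        = ((Finset.univ.filter (fun i => ¬ z i = 0)).card : ℝ) := by
      rw [Finset.sum_congr rfl
        (fun i hi => ((hz i).resolve_left (Finset.mem_filter.mp hi).2 : z i = 1))]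
      simp
    rw [← hsplit, ← hS_def] at *
    rw [h1, h2, hcardNot]
    ring
  -- sqrt rescaling
  have hq : (0:ℝ) ≤ 2*α*(1-α)*L/(m:ℝ) :=
    div_nonneg (mul_nonneg (mul_nonneg (by linarith [hα.1]) hβ.le) hL.le) hm'.le
  have ht1 : (m:ℝ) * Real.sqrt (2*α*(1-α)*L/(m:ℝ))
      = Real.sqrt (2*((m:ℝ)*α*(1-α))*L) := by
    have he : 2*((m:ℝ)*α*(1-α))*L = (2*α*(1-α)*L/(m:ℝ)) * (m:ℝ)^2 := by
      field_simp
    rw [he, Real.sqrt_mul hq, Real.sqrt_sq hm'.le]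
    ring
  have ht2 : (m:ℝ) * (L/(3*(m:ℝ))) = L/3 := by field_simp
  -- event and its complement
  have hmeasSum : Measurable fun ω => ∑ i, Y i ω :=
    Finset.measurable_sum _ fun i _ => hYmeas i
  have hEmeas : MeasurableSet {ω |
      (1 / (1 - α)) * ((1 / (m : ℝ)) * (∑ i, Y i ω) - α
        - Real.sqrt (2 * α * (1 - α) * L / (m : ℝ))
        - L / (3 * (m : ℝ)))
      ≤ (1 / (m : ℝ)) * ∑ i, z i} := by
    apply measurableSet_le _ measurable_const
    exact ((((hmeasSum.const_mul (1/(m:ℝ))).sub measurable_const).sub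
      measurable_const).sub measurable_const).const_mul (1/(1-α))
  -- subset of the tail event
  have hsub : {ω |
      (1 / (1 - α)) * ((1 / (m : ℝ)) * (∑ i, Y i ω) - α
        - Real.sqrt (2 * α * (1 - α) * L / (m : ℝ))
        - L / (3 * (m : ℝ)))
      ≤ (1 / (m : ℝ)) * ∑ i, z i}ᶜ ⊆
      {ω | α * S.card + (Real.sqrt (2*((m:ℝ)*α*(1-α))*L) + L/3)
        ≤ ∑ i ∈ S, Y i ω} := by
    intro ω hω
    rw [Set.mem_compl_iff, Set.mem_setOf_eq, not_le] at hω
    rw [Set.mem_setOf_eq]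
    rw [hzsum] at hω
    -- sum splitting
    have hsplit := Finset.sum_filter_add_sum_filter_not Finset.univ
      (fun i => z i = 0) (fun i => Y i ω)
    have hboundNot : ∑ i ∈ Finset.univ.filter (fun i => ¬ z i = 0), Y i ω
        ≤ ((Finset.univ.filter (fun i => ¬ z i = 0)).card : ℝ) := by
      refine le_trans (Finset.sum_le_card_nsmul _ _ 1 fun i _ => ?_) (by simp)
      rcases hYval i ω with h | h <;> simp [h]
    rw [← hS_def] at hsplit
    have hYsub : ∑ i, Y i ω ≤ (∑ i ∈ S, Y i ω) + ((m:ℝ) - N) := by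
      rw [← hsplit]
      linarith [hboundNot, hcardNot.le, hcardNot.ge]
    -- multiply out
    have h3 : (1-α) * ((1/(m:ℝ)) * ((m:ℝ) - N))
        < (1/(m:ℝ)) * (∑ i, Y i ω) - α
          - Real.sqrt (2 * α * (1 - α) * L / (m : ℝ)) - L / (3 * (m : ℝ)) := by
      have h := mul_lt_mul_of_pos_left hω hβ
      have hcan : ∀ Q : ℝ, (1-α) * ((1/(1-α)) * Q) = Q := fun Q => by field_simp
      rwa [hcan] at h
    have h4 := mul_lt_mul_of_pos_left h3 hm'
    have e1 : (m:ℝ) * ((1-α) * ((1/(m:ℝ)) * ((m:ℝ) - N))) = (1-α) * ((m:ℝ) - N) := by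
      field_simp
    have e2 : (m:ℝ) * ((1/(m:ℝ)) * (∑ i, Y i ω) - α
          - Real.sqrt (2 * α * (1 - α) * L / (m : ℝ)) - L / (3 * (m : ℝ)))
        = (∑ i, Y i ω) - (m:ℝ)*α
          - (m:ℝ) * Real.sqrt (2 * α * (1 - α) * L / (m : ℝ))
          - (m:ℝ) * (L / (3 * (m : ℝ))) := by
      field_simp
    rw [e1, e2, ht1, ht2] at h4
    have : α * N + (Real.sqrt (2*((m:ℝ)*α*(1-α))*L) + L/3) < ∑ i ∈ S, Y i ω := by
      linarith [hYsub, h4]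
    linarith [this]
  -- conclude
  have hρ_exp : Real.exp (-L) = ρ := by
    rw [hL_def, one_div, Real.log_inv, neg_neg, Real.exp_log hρ.1]
  have hcompl : (P {ω |
      (1 / (1 - α)) * ((1 / (m : ℝ)) * (∑ i, Y i ω) - α
        - Real.sqrt (2 * α * (1 - α) * L / (m : ℝ))
        - L / (3 * (m : ℝ)))
      ≤ (1 / (m : ℝ)) * ∑ i, z i}ᶜ).toReal ≤ ρ := by
    refine le_trans (ENNReal.toReal_mono (measure_ne_top P _) (measure_mono hsub)) ?_
    rw [← hρ_exp]
    exact hcore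
  have hadd : P _ + P _ᶜ = 1 := prob_add_prob_compl hEmeas
  have htot : (P {ω |
      (1 / (1 - α)) * ((1 / (m : ℝ)) * (∑ i, Y i ω) - α
        - Real.sqrt (2 * α * (1 - α) * L / (m : ℝ))
        - L / (3 * (m : ℝ)))
      ≤ (1 / (m : ℝ)) * ∑ i, z i}).toReal
      + (P {ω |
      (1 / (1 - α)) * ((1 / (m : ℝ)) * (∑ i, Y i ω) - α
        - Real.sqrt (2 * α * (1 - α) * L / (m : ℝ))
        - L / (3 * (m : ℝ)))
      ≤ (1 / (m : ℝ)) * ∑ i, z i}ᶜ).toReal = 1 := by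
    rw [← ENNReal.toReal_add (measure_ne_top P _) (measure_ne_top P _), hadd,
      ENNReal.toReal_one]
  linarith [hcompl, htot]
end
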